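/- For every D ⊆ T one has sdt(sds(D)) = D. Moreover: (i) D is a coherent SDT if and only if sds(D) is a coherent SDS; (ii) if sds(D) is a coherent SDS then sds(D) is a finitely coherent SDS; and (iii) if cl is finitary, then D is a coherent SDT if and only if sds(D) is a finitely coherent SDS. -/
import Mathlib


universe u

variable {T : Type u}

/-- `cl` is a closure operator on subsets of `T`. -/
def IsClosure (cl : Set T → Set T) : Prop :=
  (∀ A : Set T, A ⊆ cl A) ∧
  (∀ A B : Set T, A ⊆ B → cl A ⊆ cl B) ∧
  (∀ A : Set T, cl (cl A) = cl A)

/-- `cl` is finitary: the closure of a set is the union of the closures of its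
finite subsets. -/
def IsFinitary (cl : Set T → Set T) : Prop :=
  ∀ A : Set T, cl A = ⋃ F ∈ {F : Set T | F.Finite ∧ F ⊆ A}, cl F

/-- A coherent set of desirable things (SDT): closed and avoiding the forbidden
things `Tneg`. -/
def CohSDT (cl : Set T → Set T) (Tneg : Set T) (D : Set T) : Prop :=
  cl D = D ∧ D ∩ Tneg = ∅

/-- Selection maps of a collection `W` of sets of things: maps choosing an
element of each member of `W`. -/
def Sel (W : Set (Set T)) : Type u :=
  {σ : Set T → T // ∀ A ∈ W, σ A ∈ A}

/-- A coherent set of desirable sets of things (SDS): axioms K1–K5. -/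
def CohSDS (cl : Set T → Set T) (Tneg : Set T) (K : Set (Set T)) : Prop :=
  (∅ : Set T) ∉ K ∧
  (∀ A₁ ∈ K, ∀ A₂ : Set T, A₁ ⊆ A₂ → A₂ ∈ K) ∧
  (∀ A ∈ K, A \ Tneg ∈ K) ∧
  (∀ t ∈ cl (∅ : Set T), ({t} : Set T) ∈ K) ∧
  (∀ W ⊆ K, W.Nonempty →
    ∀ f : Sel W → T, (∀ σ : Sel W, f σ ∈ cl (σ.1 '' W)) → Set.range f ∈ K)

/-- A finitely coherent SDS: axioms K1–K4 together with K5 restricted to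
nonempty finite subcollections. -/
def FinCohSDS (cl : Set T → Set T) (Tneg : Set T) (K : Set (Set T)) : Prop :=
  (∅ : Set T) ∉ K ∧
  (∀ A₁ ∈ K, ∀ A₂ : Set T, A₁ ⊆ A₂ → A₂ ∈ K) ∧
  (∀ A ∈ K, A \ Tneg ∈ K) ∧
  (∀ t ∈ cl (∅ : Set T), ({t} : Set T) ∈ K) ∧
  (∀ W ⊆ K, W.Finite → W.Nonempty →
    ∀ f : Sel W → T, (∀ σ : Sel W, f σ ∈ cl (σ.1 '' W)) → Set.range f ∈ K)

/-- A finitely coherent set of desirable finite sets of things (SDFS):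
axioms F1–F5. -/
def FinCohSDFS (cl : Set T → Set T) (Tneg : Set T) (K : Set (Set T)) : Prop :=
  (∀ F ∈ K, F.Finite) ∧
  (∅ : Set T) ∉ K ∧
  (∀ F₁ ∈ K, ∀ F₂ : Set T, F₂.Finite → F₁ ⊆ F₂ → F₂ ∈ K) ∧
  (∀ F ∈ K, F \ Tneg ∈ K) ∧
  (∀ t ∈ cl (∅ : Set T), ({t} : Set T) ∈ K) ∧
  (∀ W ⊆ K, W.Finite → W.Nonempty →
    ∀ f : Sel W → T, (∀ σ : Sel W, f σ ∈ cl (σ.1 '' W)) → Set.range f ∈ K)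

/-- The set of things whose singletons belong to `K`. -/
def sdt (K : Set (Set T)) : Set T := {t | ({t} : Set T) ∈ K}

/-- The SDS of all sets of things meeting `D`. -/
def sds (D : Set T) : Set (Set T) := {A | (A ∩ D).Nonempty}

/-- The SDFS of all finite sets of things meeting `D`. -/
def sdfs (D : Set T) : Set (Set T) := {F | F.Finite ∧ (F ∩ D).Nonempty}

/-- The event `𝒟_A` of all coherent SDTs meeting `A`. -/
def evA (cl : Set T → Set T) (Tneg : Set T) (A : Set T) : Set (Set T) :=
  {D | CohSDT cl Tneg D ∧ (A ∩ D).Nonempty}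

/-- The event `E(W)` of all coherent SDTs meeting every member of `W`
(with `E(∅)` equal to the set of all coherent SDTs). -/
def ev (cl : Set T → Set T) (Tneg : Set T) (W : Set (Set T)) : Set (Set T) :=
  {D | CohSDT cl Tneg D ∧ ∀ A ∈ W, (A ∩ D).Nonempty}

/-- An SDS is conjunctive if every desirable set contains a desirable
singleton. -/
def Conjunctive (K : Set (Set T)) : Prop :=
  ∀ A ∈ K, ∃ t ∈ A, ({t} : Set T) ∈ K

/-- Completeness of an SDS. -/
def CompleteSDS (K : Set (Set T)) : Prop :=
  ∀ A₁ A₂ : Set T, A₁ ∪ A₂ ∈ K → A₁ ∈ K ∨ A₂ ∈ K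

/-- The finitary part `K^f` of an SDS. -/
def finPart (K : Set (Set T)) : Set (Set T) :=
  {A | ∃ B ∈ K, B.Finite ∧ B ⊆ A}

/-- An SDS is finitary if every desirable set has a finite desirable subset. -/
def FinitarySDS (K : Set (Set T)) : Prop :=
  ∀ A ∈ K, ∃ B, B.Finite ∧ B ⊆ A ∧ B ∈ K

/-- The lattice of events `E`. -/
def Ecal (cl : Set T → Set T) (Tneg : Set T) : Set (Set (Set T)) :=
  {E | ∃ W : Set (Set T), E = ev cl Tneg W}

/-- The lattice of finitary events `E_fin`. -/
def Efin (cl : Set T → Set T) (Tneg : Set T) : Set (Set (Set T)) :=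
  {E | ∃ W : Set (Set T), W.Finite ∧ E = ev cl Tneg W}

/-- A filter on a lattice of events `L` ordered by inclusion. -/
def IsFilterOn (L F : Set (Set (Set T))) : Prop :=
  F ⊆ L ∧ F.Nonempty ∧
  (∀ E₁ ∈ F, ∀ E₂ ∈ L, E₁ ⊆ E₂ → E₂ ∈ F) ∧
  (∀ E₁ ∈ F, ∀ E₂ ∈ F, E₁ ∩ E₂ ∈ F)

/-- A proper filter on `L`. -/
def IsProperFilterOn (L F : Set (Set (Set T))) : Prop :=
  IsFilterOn L F ∧ F ≠ L

/-- A prime filter on `L`. -/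
def IsPrimeFilterOn (L F : Set (Set (Set T))) : Prop :=
  IsProperFilterOn L F ∧
  ∀ E₁ ∈ L, ∀ E₂ ∈ L, E₁ ∪ E₂ ∈ F → E₁ ∈ F ∨ E₂ ∈ F

/-- A proper principal filter on `L`: the upset of some nonempty `E₀ ∈ L`. -/
def IsProperPrincipalFilterOn (L F : Set (Set (Set T))) : Prop :=
  ∃ E₀ ∈ L, E₀ ≠ (∅ : Set (Set T)) ∧ F = {E' | E' ∈ L ∧ E₀ ⊆ E'}

/-- The map `f̂` sending an SDS to the collection of events of its finite
subcollections. -/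
def fhat (cl : Set T → Set T) (Tneg : Set T) (K : Set (Set T)) :
    Set (Set (Set T)) :=
  {E | ∃ W : Set (Set T), W ⊆ K ∧ W.Finite ∧ E = ev cl Tneg W}

/-- The map `f` sending an SDS to the collection of events of all of its
subcollections. -/
def fprin (cl : Set T → Set T) (Tneg : Set T) (K : Set (Set T)) :
    Set (Set (Set T)) :=
  {E | ∃ W : Set (Set T), W ⊆ K ∧ E = ev cl Tneg W}

/-- The map `d` sending a collection of events to the SDS it determines. -/
def dmap (cl : Set T → Set T) (Tneg : Set T) (F : Set (Set (Set T))) :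
    Set (Set T) :=
  {A : Set T | evA cl Tneg A ∈ F}

/-- `K` is finitely consistent: it is included in some finitely coherent SDS. -/
def FinConsistent (cl : Set T → Set T) (Tneg : Set T) (K : Set (Set T)) : Prop :=
  ∃ K' : Set (Set T), FinCohSDS cl Tneg K' ∧ K ⊆ K'

/-- `K` is consistent: it is included in some coherent SDS. -/
def Consistent (cl : Set T → Set T) (Tneg : Set T) (K : Set (Set T)) : Prop :=
  ∃ K' : Set (Set T), CohSDS cl Tneg K' ∧ K ⊆ K'

/-- The finitary closure operator on SDSes (with value `𝒫(T)` when `K` is not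
finitely consistent, via the empty-intersection convention). -/
def clFin (cl : Set T → Set T) (Tneg : Set T) (K : Set (Set T)) : Set (Set T) :=
  ⋂₀ {K' : Set (Set T) | FinCohSDS cl Tneg K' ∧ K ⊆ K'}

/-- The closure operator on SDSes (with value `𝒫(T)` when `K` is not
consistent, via the empty-intersection convention). -/
def clSDS (cl : Set T → Set T) (Tneg : Set T) (K : Set (Set T)) : Set (Set T) :=
  ⋂₀ {K' : Set (Set T) | CohSDS cl Tneg K' ∧ K ⊆ K'}

open Classical in
noncomputable def selOf [Nonempty T] (D : Set T) : Set T → T :=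
  fun A => if h : (A ∩ D).Nonempty then h.choose else Classical.arbitrary T

lemma selOf_mem [Nonempty T] {D A : Set T} (h : (A ∩ D).Nonempty) :
    selOf D A ∈ A ∩ D := by
  simp only [selOf, dif_pos h]
  exact h.choose_spec

lemma forward_K5 [Nonempty T] {cl : Set T → Set T}
    (hmono : ∀ A B : Set T, A ⊆ B → cl A ⊆ cl B)
    {D : Set T} (hclD : cl D ⊆ D) :
    ∀ W ⊆ sds D, W.Nonempty → ∀ f : Sel W → T,
      (∀ σ : Sel W, f σ ∈ cl (σ.1 '' W)) → Set.range f ∈ sds D := by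
  intro W hW _ f hf
  have hσ : ∀ A ∈ W, selOf D A ∈ A := fun A hA => (selOf_mem (hW hA)).1
  let σ₀ : Sel W := ⟨selOf D, hσ⟩
  have h1 : σ₀.1 '' W ⊆ D := by
    rintro x ⟨A, hA, rfl⟩
    exact (selOf_mem (hW hA)).2
  exact ⟨f σ₀, ⟨σ₀, rfl⟩, hclD (hmono _ _ h1 (hf σ₀))⟩

lemma key_singleton [Nonempty T] {cl : Set T → Set T} {D F : Set T}
    (hF : F ⊆ D) {t : T} (ht : t ∈ cl F)
    (hK5 : ∀ f : Sel ((fun d => ({d} : Set T)) '' F) → T,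
      (∀ σ : Sel ((fun d => ({d} : Set T)) '' F),
        f σ ∈ cl (σ.1 '' ((fun d => ({d} : Set T)) '' F))) →
      Set.range f ∈ sds D) : t ∈ D := by
  set W : Set (Set T) := (fun d => ({d} : Set T)) '' F with hWdef
  have himg : ∀ σ : Sel W, σ.1 '' W = F := by
    intro σ
    ext x
    constructor
    · rintro ⟨A, hA, rfl⟩
      obtain ⟨d, hd, rfl⟩ := hA
      have h2 : σ.1 {d} ∈ ({d} : Set T) := σ.2 _ ⟨d, hd, rfl⟩
      rw [Set.mem_singleton_iff] at h2
      rwa [h2]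
    · intro hx
      refine ⟨{x}, ⟨x, hx, rfl⟩, ?_⟩
      have h2 : σ.1 {x} ∈ ({x} : Set T) := σ.2 _ ⟨x, hx, rfl⟩
      rwa [Set.mem_singleton_iff] at h2
  have hrange := hK5 (fun _ => t) (fun σ => by rw [himg σ]; exact ht)
  have hSel : Nonempty (Sel W) := by
    refine ⟨⟨selOf D, fun A hA => ?_⟩⟩
    obtain ⟨d, hd, rfl⟩ := hA
    exact (selOf_mem (⟨d, rfl, hF hd⟩ : (({d} : Set T) ∩ D).Nonempty)).1
  rw [Set.range_const] at hrange
  obtain ⟨x, hx1, hx2⟩ := hrange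
  rw [Set.mem_singleton_iff] at hx1
  rwa [hx1] at hx2

/-- Proposition on the map `sds` from coherent SDTs to (finitely) coherent
SDSes. -/
theorem cohSDT_to_cohSDS (T : Type u) [Nonempty T]
    (cl : Set T → Set T) (Tneg : Set T)
    (hcl : IsClosure cl) (hsan : cl (∅ : Set T) ∩ Tneg = ∅)
    (D : Set T) :
    sdt (sds D) = D ∧
    (CohSDT cl Tneg D ↔ CohSDS cl Tneg (sds D)) ∧
    (CohSDS cl Tneg (sds D) → FinCohSDS cl Tneg (sds D)) ∧
    (IsFinitary cl → (CohSDT cl Tneg D ↔ FinCohSDS cl Tneg (sds D))) := by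
  obtain ⟨hext, hmono, hidem⟩ := hcl
  have h0 : sdt (sds D) = D := by
    ext t
    simp [sdt, sds, Set.singleton_inter_nonempty]
  have hK1 : (∅ : Set T) ∉ sds D := by simp [sds]
  have hK2 : ∀ A₁ ∈ sds D, ∀ A₂ : Set T, A₁ ⊆ A₂ → A₂ ∈ sds D := by
    rintro A₁ ⟨t, ht, htD⟩ A₂ hsub
    exact ⟨t, hsub ht, htD⟩
  -- forward direction
  have fwd : CohSDT cl Tneg D → CohSDS cl Tneg (sds D) := by
    rintro ⟨hclD, hTneg⟩
    refine ⟨hK1, hK2, ?_, ?_, forward_K5 hmono hclD.le⟩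
    · rintro A ⟨t, ht, htD⟩
      refine ⟨t, ⟨ht, fun htn => ?_⟩, htD⟩
      exact absurd (Set.eq_empty_iff_forall_notMem.mp hTneg t ⟨htD, htn⟩) (by simp)
    · intro t ht
      exact ⟨t, rfl, hclD ▸ hmono _ _ (Set.empty_subset D) ht⟩
  -- common converse pieces
  have bwd_core : (∀ A ∈ sds D, A \ Tneg ∈ sds D) →
      (∀ t ∈ cl (∅ : Set T), ({t} : Set T) ∈ sds D) →
      (cl D ⊆ D) → CohSDT cl Tneg D := by
    intro hK3 hK4 hclD
    refine ⟨le_antisymm hclD (hext D), ?_⟩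
    by_contra h
    obtain ⟨t, htD, htn⟩ := Set.nonempty_iff_ne_empty.mpr h
    have h1 : ({t} : Set T) ∈ sds D := ⟨t, rfl, htD⟩
    have h2 := hK3 _ h1
    have h3 : ({t} : Set T) \ Tneg = ∅ := by
      ext x; simp only [Set.mem_diff, Set.mem_singleton_iff, Set.mem_empty_iff_false,
        iff_false, not_and, not_not]
      rintro rfl; exact htn
    rw [h3] at h2
    exact hK1 h2
  have hclempty : (∀ t ∈ cl (∅ : Set T), ({t} : Set T) ∈ sds D) →
      cl (∅ : Set T) ⊆ D := by
    rintro hK4 t ht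
    obtain ⟨x, hx, hxD⟩ := hK4 t ht
    rw [Set.mem_singleton_iff] at hx
    rwa [hx] at hxD
  have bwd_full : CohSDS cl Tneg (sds D) → CohSDT cl Tneg D := by
    rintro ⟨hK1', hK2', hK3, hK4, hK5⟩
    refine bwd_core hK3 hK4 ?_
    intro t ht
    rcases D.eq_empty_or_nonempty with hD | hD
    · exact hclempty hK4 (by rwa [hD] at ht)
    · refine key_singleton (le_refl D) ht (fun f hf => ?_)
      refine hK5 _ ?_ ?_ f hf
      · rintro A ⟨d, hd, rfl⟩
        exact ⟨d, rfl, hd⟩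
      · obtain ⟨d, hd⟩ := hD
        exact ⟨{d}, d, hd, rfl⟩
  have coh_to_fin : CohSDS cl Tneg (sds D) → FinCohSDS cl Tneg (sds D) := by
    rintro ⟨h1, h2, h3, h4, h5⟩
    exact ⟨h1, h2, h3, h4, fun W hW _ hne f hf => h5 W hW hne f hf⟩
  refine ⟨h0, ⟨fwd, bwd_full⟩, coh_to_fin, fun hfin => ⟨fun h => coh_to_fin (fwd h), ?_⟩⟩
  rintro ⟨hK1', hK2', hK3, hK4, hK5⟩
  refine bwd_core hK3 hK4 ?_
  intro t ht
  rw [hfin D] at ht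
  simp only [Set.mem_iUnion] at ht
  obtain ⟨F, ⟨hFfin, hFD⟩, htF⟩ := ht
  rcases F.eq_empty_or_nonempty with hF | hF
  · exact hclempty hK4 (by rwa [hF] at htF)
  · refine key_singleton hFD htF (fun f hf => ?_)
    refine hK5 _ ?_ (hFfin.image _) ?_ f hf
    · rintro A ⟨d, hd, rfl⟩
      exact ⟨d, rfl, hFD hd⟩
    · obtain ⟨d, hd⟩ := hF
      exact ⟨{d}, d, hd, rfl⟩
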